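/- Let 0 < λ < 1, p = λ/(1+λ), q = 1/(1+λ), and P(n) = A_n p^{n−1} q^n where A_n = (1/n)·C(2n−2, n−1). Then for every integer m ≥ 1 the m-th factorial moment of this distribution satisfies Σ_{n≥1} n(n−1)⋯(n−m+1) P(n) = 2^{m−1} (2m−3)!! λ^{m−1} / (1−λ)^{2m−1}, where (2m−3)!! = (2m−3)(2m−5)⋯3·1 and (−1)!! = 1. Consequently the m-th ordinary moment Σ_{n≥1} n^m P(n) is asymptotic to 2^{m−1} (2m−3)!! λ^{m−1} / (1−λ)^{2m−1} as λ → 1⁻. -/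

import Mathlib

open Finset


lemma cb_succ (k : ℕ) : ((k:ℝ)+1) * (Nat.centralBinom (k+1) : ℝ) = 2*(2*(k:ℝ)+1) * Nat.centralBinom k := by
  have := Nat.succ_mul_centralBinom_succ k
  exact_mod_cast congrArg (Nat.cast (R := ℝ)) this

lemma sym_sum (n : ℕ) :
    2 * ∑ j ∈ range (n+1), (j:ℝ) * Nat.centralBinom j * Nat.centralBinom (n-j)
      = n * ∑ j ∈ range (n+1), (Nat.centralBinom j : ℝ) * Nat.centralBinom (n-j) := by
  have h := Finset.sum_range_reflect (fun j => (j:ℝ) * Nat.centralBinom j * Nat.centralBinom (n-j)) (n+1)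
  have h2 : ∀ j ∈ range (n+1), ((n+1-1-j:ℕ):ℝ) * Nat.centralBinom (n+1-1-j) * Nat.centralBinom (n-(n+1-1-j))
      = ((n:ℝ) - j) * Nat.centralBinom (n-j) * Nat.centralBinom j := by
    intro j hj
    rw [mem_range] at hj
    have hj' : j ≤ n := by omega
    have e1 : n+1-1-j = n - j := by omega
    have e2 : n - (n - j) = j := by omega
    rw [e1, e2, Nat.cast_sub hj']
  rw [Finset.sum_congr rfl h2] at h
  calc 2 * ∑ j ∈ range (n+1), (j:ℝ) * Nat.centralBinom j * Nat.centralBinom (n-j)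
      = (∑ j ∈ range (n+1), ((n:ℝ) - j) * Nat.centralBinom (n-j) * Nat.centralBinom j)
        + ∑ j ∈ range (n+1), (j:ℝ) * Nat.centralBinom j * Nat.centralBinom (n-j) := by
        rw [h]; ring
    _ = ∑ j ∈ range (n+1), (((n:ℝ) - j) * Nat.centralBinom (n-j) * Nat.centralBinom j
        + (j:ℝ) * Nat.centralBinom j * Nat.centralBinom (n-j)) := by rw [Finset.sum_add_distrib]
    _ = n * ∑ j ∈ range (n+1), (Nat.centralBinom j : ℝ) * Nat.centralBinom (n-j) := by
        rw [Finset.mul_sum]; exact Finset.sum_congr rfl fun j _ => by ring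

lemma conv_cb (n : ℕ) :
    ∑ j ∈ range (n+1), (Nat.centralBinom j : ℝ) * Nat.centralBinom (n-j) = 4^n := by
  induction n with
  | zero => simp [Nat.centralBinom]
  | succ n ih =>
    -- W = sum over range (n+2) of j * cb j * cb (n+1-j)
    have hW : ∑ j ∈ range (n+2), (j:ℝ) * Nat.centralBinom j * Nat.centralBinom (n+1-j)
        = (2*(n:ℝ)+2) * ∑ j ∈ range (n+1), (Nat.centralBinom j : ℝ) * Nat.centralBinom (n-j) := by
      rw [Finset.sum_range_succ' (fun j => (j:ℝ) * Nat.centralBinom j * Nat.centralBinom (n+1-j)) (n+1)]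
      simp only [Nat.cast_zero, zero_mul, add_zero]
      have step : ∀ j ∈ range (n+1), ((j+1:ℕ):ℝ) * Nat.centralBinom (j+1) * Nat.centralBinom (n+1-(j+1))
          = 4 * ((j:ℝ) * Nat.centralBinom j * Nat.centralBinom (n-j))
            + 2 * ((Nat.centralBinom j:ℝ) * Nat.centralBinom (n-j)) := by
        intro j hj
        have e : n+1-(j+1) = n - j := by omega
        rw [e]
        have hc := cb_succ j
        push_cast
        nlinarith [hc]
      rw [Finset.sum_congr rfl step, Finset.sum_add_distrib, ← Finset.mul_sum, ← Finset.mul_sum]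
      have := sym_sum n
      linarith [this]
    have hW2 := sym_sum (n+1)
    push_cast at hW2
    rw [hW] at hW2
    rw [ih] at hW2
    have hpos : (0:ℝ) < (n:ℝ) + 1 := by positivity
    have : ∑ j ∈ range (n+1+1), (Nat.centralBinom j : ℝ) * Nat.centralBinom (n+1-j) = 4 * 4^n := by
      nlinarith [hW2]
    rw [this]; ring

lemma cb_le_four_pow (k : ℕ) : Nat.centralBinom k ≤ 4^k := by
  induction k with
  | zero => simp [Nat.centralBinom]
  | succ k ih =>
    have h := Nat.succ_mul_centralBinom_succ k
    have h2 : (k+1) * Nat.centralBinom (k+1) ≤ (k+1) * 4^(k+1) := by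
      rw [h]
      have : 2 * (2*k+1) * Nat.centralBinom k ≤ 2*(2*k+2) * 4^k :=
        Nat.mul_le_mul (by omega) ih
      calc 2 * (2*k+1) * Nat.centralBinom k ≤ 2*(2*k+2) * 4^k := this
        _ = (k+1) * 4^(k+1) := by ring
    exact Nat.le_of_mul_le_mul_left h2 (by omega)

-- base case series
lemma hasSum_cb (y t : ℝ) (hy0 : 0 ≤ y) (hy1 : y < 1) (ht : 0 < t) (h : t^2 = 1 - y) :
    HasSum (fun k : ℕ => (Nat.centralBinom k : ℝ) * (y/4)^k) (1/t) := by
  set f : ℕ → ℝ := fun k => (Nat.centralBinom k : ℝ) * (y/4)^k with hf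
  have hnonneg : ∀ k, 0 ≤ f k := fun k => by positivity
  have hle : ∀ k, f k ≤ y^k := by
    intro k
    have h1 : (Nat.centralBinom k : ℝ) ≤ 4^k := by exact_mod_cast cb_le_four_pow k
    have h2 : (0:ℝ) ≤ (y/4)^k := by positivity
    have h3 : f k ≤ 4^k * (y/4)^k := mul_le_mul_of_nonneg_right h1 h2
    have h4 : (4:ℝ)^k * (y/4)^k = y^k := by
      rw [← mul_pow]; congr 1; ring
    linarith [h3, h4.le, h4.ge]
  have hsummable : Summable f :=
    Summable.of_nonneg_of_le hnonneg hle (summable_geometric_of_lt_one hy0 hy1)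
  have hnorm : Summable fun k => ‖f k‖ := by
    simpa [Real.norm_of_nonneg (hnonneg _)] using hsummable
  -- Cauchy product
  have hcp := hasSum_sum_range_mul_of_summable_norm (f := f) (g := f) hnorm hnorm
  have hconv : ∀ n : ℕ, ∑ k ∈ range (n+1), f k * f (n-k) = y^n := by
    intro n
    have : ∀ k ∈ range (n+1), f k * f (n-k)
        = ((Nat.centralBinom k : ℝ) * Nat.centralBinom (n-k)) * (y/4)^n := by
      intro k hk
      rw [mem_range] at hk
      have : (y/4)^k * (y/4)^(n-k) = (y/4)^n := by
        rw [← pow_add]; congr 1; omega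
      simp only [hf]
      linear_combination ((Nat.centralBinom k : ℝ) * (Nat.centralBinom (n-k) : ℝ)) * this
    rw [Finset.sum_congr rfl this, ← Finset.sum_mul, conv_cb n]
    have h44 : (4:ℝ)*(y/4) = y := by ring
    rw [← mul_pow, h44]
  have hgeo : HasSum (fun n : ℕ => y^n) (1/(1-y)) := by
    simpa [one_div] using hasSum_geometric_of_lt_one hy0 hy1
  have hsq : (∑' n, f n) * (∑' n, f n) = 1/(1-y) := by
    have := hcp.tsum_eq
    rw [tsum_congr hconv] at this
    rw [← this, hgeo.tsum_eq]
  have hpos : 0 < ∑' n, f n := by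
    have h0 : f 0 = 1 := by simp [hf, Nat.centralBinom]
    have := Summable.le_tsum hsummable 0 (fun j _ => hnonneg j)
    rw [h0] at this; linarith
  have ht2 : (1/t)*(1/t) = 1/(1-y) := by
    rw [← h]
    rw [mul_one_div, div_div, ← sq]
  have : ∑' n, f n = 1/t := by
    nlinarith [hsq, ht2, hpos, ht, one_div_pos.mpr ht, sq_nonneg (∑' n, f n - 1/t), sq_nonneg (∑' n, f n + 1/t)]
  exact this ▸ hsummable.hasSum

noncomputable def Dd : ℕ → ℝ
  | 0 => 1
  | (j+1) => (2*j+1) * Dd j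

lemma Dd_pos : ∀ M, 0 < Dd M
  | 0 => one_pos
  | (j+1) => by
      have := Dd_pos j
      unfold Dd; positivity

noncomputable def cc (M k : ℕ) : ℝ := Dd (M+k) / (Dd M * 2^k * (k.factorial : ℝ))

lemma Dd_succ (j : ℕ) : Dd (j+1) = (2*(j:ℝ)+1) * Dd j := rfl

lemma Dd_fact (k : ℕ) : Dd k * 2^k * (k.factorial : ℝ) = ((2*k).factorial : ℝ) := by
  induction k with
  | zero => simp [Dd]
  | succ k ih =>
    have h2 : 2*(k+1) = (2*k+1)+1 := by ring
    rw [h2, Nat.factorial_succ, Nat.factorial_succ, Nat.factorial_succ]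
    push_cast
    unfold Dd
    linear_combination (2*(k:ℝ)+1)*2*((k:ℝ)+1) * ih

lemma cb_eq' (k : ℕ) : Dd k / (2^k * (k.factorial:ℝ)) = (Nat.centralBinom k : ℝ) / 4^k := by
  have h := Nat.choose_mul_factorial_mul_factorial (Nat.le_mul_of_pos_left k two_pos : k ≤ 2*k)
  have hf : (0:ℝ) < (k.factorial : ℝ) := by exact_mod_cast Nat.factorial_pos k
  have h2 : (2*k - k) = k := by omega
  rw [h2] at h
  have hcast : (Nat.centralBinom k : ℝ) * k.factorial * k.factorial = ((2*k).factorial : ℝ) := by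
    rw [Nat.centralBinom]; exact_mod_cast congrArg (Nat.cast (R := ℝ)) h
  have hd := Dd_fact k
  have h4 : (4:ℝ)^k = 2^k * 2^k := by rw [← mul_pow]; norm_num
  rw [h4]
  have h2p : (0:ℝ) < 2^k := by positivity
  field_simp
  nlinarith [hd, hcast, h2p, hf]

lemma ddf' : ∀ M : ℕ, (((2*M+1).doubleFactorial : ℕ) : ℝ) = Dd (M+1)
  | 0 => by simp [Nat.doubleFactorial, Dd]
  | (M+1) => by
    rw [show 2*(M+1)+1 = (2*M+1)+2 from by ring, Nat.doubleFactorial_add_two]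
    push_cast
    rw [ddf' M, Dd_succ (M+1)]
    push_cast; ring

lemma ddf (M : ℕ) : (((2*(M+1)-3).doubleFactorial : ℕ) : ℝ) = Dd M := by
  cases M with
  | zero => simp [Nat.doubleFactorial, Dd]
  | succ K =>
    rw [show 2*(K+1+1)-3 = 2*K+1 from by omega]
    exact ddf' K

lemma cc_zero (K : ℕ) : cc K 0 = 1 := by
  unfold cc
  simp [div_self (Dd_pos K).ne']

lemma cc_pos (M k : ℕ) : 0 < cc M k := by
  unfold cc
  have h1 := Dd_pos (M+k); have h2 := Dd_pos M
  have h3 : (0:ℝ) < (k.factorial : ℝ) := by exact_mod_cast Nat.factorial_pos k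
  positivity

lemma cc_partial (M : ℕ) : ∀ n : ℕ, ∑ j ∈ range (n+1), cc M j = cc (M+1) n := by
  intro n
  induction n with
  | zero =>
    rw [Finset.sum_range_one, cc_zero, cc_zero]
  | succ n ih =>
    rw [Finset.sum_range_succ, ih]
    unfold cc
    have e1 : M + 1 + n = M + n + 1 := by ring
    have e2 : M + (n+1) = M + n + 1 := by ring
    have e3 : M + 1 + (n+1) = M + n + 2 := by ring
    rw [e1, e2, e3]
    have hD1 : Dd (M+n+2) = (2*((M:ℝ)+n)+3) * Dd (M+n+1) := by
      rw [show M+n+2 = (M+n+1)+1 from rfl, Dd_succ]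
      push_cast; ring
    have hD2 : Dd (M+1) = (2*(M:ℝ)+1) * Dd M := Dd_succ M
    rw [hD1, hD2, Nat.factorial_succ]
    have hDM := Dd_pos M
    have hDMn := Dd_pos (M+n+1)
    have hf : (0:ℝ) < (n.factorial : ℝ) := by exact_mod_cast Nat.factorial_pos n
    have h2 : (0:ℝ) < (2:ℝ)^n := by positivity
    push_cast
    field_simp
    ring

lemma key_hasSum (y t : ℝ) (hy0 : 0 ≤ y) (hy1 : y < 1) (ht : 0 < t) (h : t^2 = 1-y) :
    ∀ M : ℕ, HasSum (fun k : ℕ => cc M k * y^k) (1/t^(2*M+1)) := by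
  intro M
  induction M with
  | zero =>
    have hb := hasSum_cb y t hy0 hy1 ht h
    have : (fun k : ℕ => cc 0 k * y^k) = fun k : ℕ => (Nat.centralBinom k : ℝ) * (y/4)^k := by
      funext k
      unfold cc
      rw [show Dd 0 = 1 from rfl, one_mul, zero_add, cb_eq']
      rw [div_pow, mul_comm_div, ← mul_div_assoc]
    rw [this]
    simpa using hb
  | succ M ih =>
    have hfn : ∀ k, 0 ≤ cc M k * y^k := fun k => mul_nonneg (cc_pos M k).le (pow_nonneg hy0 k)
    have hnf : Summable fun k => ‖cc M k * y^k‖ := by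
      simpa [Real.norm_of_nonneg (hfn _)] using ih.summable
    have hg : HasSum (fun k : ℕ => y^k) (1-y)⁻¹ := hasSum_geometric_of_lt_one hy0 hy1
    have hng : Summable fun k : ℕ => ‖y^k‖ := by
      simpa [Real.norm_of_nonneg (pow_nonneg hy0 _)] using hg.summable
    have hcp := hasSum_sum_range_mul_of_summable_norm hnf hng
    rw [ih.tsum_eq, hg.tsum_eq] at hcp
    have hconv : ∀ n : ℕ, ∑ k ∈ range (n+1), (cc M k * y^k) * y^(n-k) = cc (M+1) n * y^n := by
      intro n
      have : ∀ k ∈ range (n+1), (cc M k * y^k) * y^(n-k) = cc M k * y^n := by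
        intro k hk
        rw [mem_range] at hk
        rw [mul_assoc, ← pow_add]
        congr 2
        omega
      rw [Finset.sum_congr rfl this, ← Finset.sum_mul, cc_partial M n]
    have hval : 1/t^(2*M+1) * (1-y)⁻¹ = 1/t^(2*(M+1)+1) := by
      rw [← h]
      have htn : t ≠ 0 := ht.ne'
      rw [show 2*(M+1)+1 = (2*M+1)+2 from by ring, pow_add]
      field_simp
      ring
    simp only [hconv] at hcp
    rw [hval] at hcp
    exact hcp

lemma prod_cast_descFactorial (a k : ℕ) :
    ∏ j ∈ range k, ((a:ℝ) - j) = (a.descFactorial k : ℝ) := by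
  induction k with
  | zero => simp
  | succ k ih =>
    rw [Finset.prod_range_succ, ih, Nat.descFactorial_succ]
    by_cases h : k ≤ a
    · push_cast [h]
      ring
    · have h1 : a.descFactorial k = 0 := Nat.descFactorial_eq_zero_iff_lt.mpr (by omega)
      simp [h1]

-- coefficient identity for n ≥ M (cleared denominators)
lemma coeff_ident (M n : ℕ) (h : M ≤ n) :
    (((n+1).descFactorial (M+1) : ℕ) : ℝ) * ((2*n).choose n : ℝ) * ((n-M).factorial : ℝ)
      = 2^n * Dd n * ((n:ℝ)+1) := by
  have hdf := Nat.factorial_mul_descFactorial (show M+1 ≤ n+1 by omega)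
  have e : n+1-(M+1) = n-M := by omega
  rw [e] at hdf
  have hch := Nat.choose_mul_factorial_mul_factorial (show n ≤ 2*n by omega)
  have e2 : 2*n-n = n := by omega
  rw [e2] at hch
  have hD := Dd_fact n
  have hdfR : ((n-M).factorial : ℝ) * ((n+1).descFactorial (M+1) : ℝ) = ((n+1).factorial : ℝ) := by
    exact_mod_cast congrArg (Nat.cast (R := ℝ)) hdf
  have hchR : ((2*n).choose n : ℝ) * (n.factorial : ℝ) * (n.factorial : ℝ) = ((2*n).factorial : ℝ) := by
    exact_mod_cast congrArg (Nat.cast (R := ℝ)) hch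
  have hfs : ((n+1).factorial : ℝ) = ((n:ℝ)+1) * (n.factorial : ℝ) := by
    rw [Nat.factorial_succ]; push_cast; ring
  have p2 : (0:ℝ) < (n.factorial : ℝ) := by exact_mod_cast Nat.factorial_pos _
  rw [hfs] at hdfR
  have h5 : ((2*n).choose n : ℝ) * (n.factorial:ℝ) * (n.factorial:ℝ) = (Dd n * 2^n) * (n.factorial:ℝ) := by
    linear_combination hchR - hD
  have hchn : ((2*n).choose n : ℝ) * (n.factorial:ℝ) = Dd n * 2^n := by
    exact mul_right_cancel₀ p2.ne' h5
  -- multiply hdfR by ch, use hchn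
  have hgoal : (((n+1).descFactorial (M+1) : ℕ) : ℝ) * ((2*n).choose n : ℝ) * ((n-M).factorial : ℝ) * (n.factorial : ℝ)
      = 2^n * Dd n * ((n:ℝ)+1) * (n.factorial : ℝ) := by
    linear_combination ((2*n).choose n : ℝ) * hdfR * (n.factorial:ℝ) + ((n:ℝ)+1) * (n.factorial:ℝ) * hchn
  exact mul_right_cancel₀ p2.ne' hgoal

lemma L1 (M : ℕ) {lam : ℝ} (h0 : 0 < lam) (h1 : lam < 1) :
    HasSum (fun n : ℕ => (((n+1).descFactorial (M+1) : ℕ) : ℝ) *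
        (((2*n).choose n : ℝ) / ((n:ℝ)+1) * (lam/(1+lam))^n * (1/(1+lam))^(n+1)))
      (2^M * Dd M * lam^M / (1-lam)^(2*M+1)) := by
  have hml : (0:ℝ) < 1 - lam := by linarith
  obtain ⟨u, hu⟩ : ∃ u : ℝ, u = 1 + lam := ⟨_, rfl⟩
  rw [← hu]
  have hl : (0:ℝ) < u := by rw [hu]; linarith
  obtain ⟨y, hy⟩ : ∃ y : ℝ, y = 4*lam/(u*u) := ⟨_, rfl⟩
  obtain ⟨t, htdef⟩ : ∃ t : ℝ, t = (1-lam)/u := ⟨_, rfl⟩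
  have hy0 : 0 ≤ y := by rw [hy]; positivity
  have hy1 : y < 1 := by
    rw [hy, div_lt_one (by positivity), hu]
    nlinarith
  have ht : 0 < t := by rw [htdef]; positivity
  have ht2 : t^2 = 1 - y := by
    rw [htdef, hy, div_pow, eq_sub_iff_add_eq, div_add_div _ _ (by positivity) (by positivity),
      div_eq_one_iff_eq (by positivity), hu]
    ring
  have hkey := key_hasSum y t hy0 hy1 ht ht2 M
  have hC := hkey.mul_left (2^M * Dd M * (lam/u)^M * (1/u)^(M+1))
  set f : ℕ → ℝ := fun n => (((n+1).descFactorial (M+1) : ℕ) : ℝ) *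
        (((2*n).choose n : ℝ) / ((n:ℝ)+1) * (lam/u)^n * (1/u)^(n+1)) with hf
  have hkf : ∀ k : ℕ, ((k.factorial : ℕ) : ℝ) ≠ 0 := fun k => by
    exact_mod_cast (Nat.factorial_pos k).ne'
  have hshift : ∀ k : ℕ, (2^M * Dd M * (lam/u)^M * (1/u)^(M+1)) * (cc M k * y^k) = f (k + M) := by
    intro k
    have hn1 : (0:ℝ) < ((k+M:ℕ):ℝ)+1 := by positivity
    have hid := coeff_ident M (k+M) (by omega)
    have e : k + M - M = k := by omega
    rw [e] at hid
    have e2 : (((k+M+1).descFactorial (M+1) : ℕ) : ℝ) * ((2*(k+M)).choose (k+M) : ℝ)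
        = 2^(k+M) * Dd (k+M) * (((k+M:ℕ):ℝ)+1) / ((k.factorial : ℕ) : ℝ) := by
      rw [eq_div_iff (hkf k)]
      exact hid
    have e1 : f (k+M) = ((((k+M+1).descFactorial (M+1):ℕ):ℝ) * ((2*(k+M)).choose (k+M) : ℝ))
        / (((k+M:ℕ):ℝ)+1) * (lam/u)^(k+M) * (1/u)^(k+M+1) := by
      simp only [hf]
      ring
    have hyk : y^k = 2^k*2^k*lam^k/(u^k*u^k) := by
      rw [hy, show (4:ℝ)*lam/(u*u) = 2*2*lam/(u*u) from by norm_num]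
      simp only [div_pow, mul_pow]
    rw [e1, e2]
    unfold cc
    rw [hyk]
    have hDM := (Dd_pos M).ne'
    have hu0 : u ≠ 0 := hl.ne'
    field_simp
    ring_nf
    simp only [inv_pow]
    field_simp
  have hzero : ∀ i ∈ range M, f i = 0 := by
    intro i hi
    rw [mem_range] at hi
    have : (i+1).descFactorial (M+1) = 0 := Nat.descFactorial_eq_zero_iff_lt.mpr (by omega)
    simp only [hf, this, Nat.cast_zero, zero_mul]
  have hval : (2^M * Dd M * (lam/u)^M * (1/u)^(M+1)) * (1/t^(2*M+1))
      = 2^M * Dd M * lam^M / (1-lam)^(2*M+1) := by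
    rw [htdef]
    have hlu : u ≠ 0 := hl.ne'
    have hmlu : (1-lam) ≠ 0 := hml.ne'
    simp only [div_pow, one_pow]
    field_simp
    ring
  rw [hval] at hC
  have hCf : HasSum (fun k : ℕ => f (k + M)) (2^M * Dd M * lam^M / (1-lam)^(2*M+1)) := by
    have hfe : (fun k : ℕ => (2^M * Dd M * (lam/u)^M * (1/u)^(M+1)) * (cc M k * y^k))
        = fun k : ℕ => f (k + M) := funext hshift
    rwa [hfe] at hC
  have := (hasSum_nat_add_iff (f := f) M).mp hCf
  rwa [Finset.sum_eq_zero hzero, add_zero] at this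


def St : ℕ → ℕ → ℕ
  | 0, 0 => 1
  | 0, _+1 => 0
  | _+1, 0 => 0
  | m+1, k+1 => (k+1) * St m (k+1) + St m k

lemma St_succ_zero (m : ℕ) : St (m+1) 0 = 0 := rfl
lemma St_succ_succ (m k : ℕ) : St (m+1) (k+1) = (k+1) * St m (k+1) + St m k := rfl

lemma St_gt : ∀ m k : ℕ, m < k → St m k = 0
  | 0, 0 => by omega
  | 0, k+1 => fun _ => rfl
  | m+1, 0 => by omega
  | m+1, k+1 => fun h => by
      rw [St_succ_succ, St_gt m (k+1) (by omega), St_gt m k (by omega)]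
      ring

lemma St_diag : ∀ m : ℕ, St m m = 1
  | 0 => rfl
  | m+1 => by rw [St_succ_succ, St_gt m (m+1) (by omega), St_diag m]; ring

lemma stirling_expand (m : ℕ) (x : ℝ) :
    x^m = ∑ k ∈ range (m+1), (St m k : ℝ) * ∏ j ∈ range k, (x - (j:ℝ)) := by
  induction m with
  | zero => simp [St]
  | succ m ih =>
    have hxf : ∀ k : ℕ, x * ∏ j ∈ range k, (x - (j:ℝ))
        = (∏ j ∈ range (k+1), (x - (j:ℝ))) + k * ∏ j ∈ range k, (x - (j:ℝ)) := by
      intro k; rw [Finset.prod_range_succ]; ring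
    calc x^(m+1) = x * x^m := by ring
      _ = ∑ k ∈ range (m+1), (St m k:ℝ) * (x * ∏ j ∈ range k, (x - (j:ℝ))) := by
          rw [ih, Finset.mul_sum]; exact Finset.sum_congr rfl (fun k _ => by ring)
      _ = ∑ k ∈ range (m+1), ((St m k:ℝ) * ∏ j ∈ range (k+1), (x - (j:ℝ)))
          + ∑ k ∈ range (m+1), ((k:ℝ) * St m k * ∏ j ∈ range k, (x - (j:ℝ))) := by
          rw [← Finset.sum_add_distrib]
          exact Finset.sum_congr rfl (fun k _ => by rw [hxf k]; ring)
      _ = ∑ k ∈ range (m+1), ((St m k:ℝ) * ∏ j ∈ range (k+1), (x - (j:ℝ)))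
          + ∑ k ∈ range (m+2), ((k:ℝ) * St m k * ∏ j ∈ range k, (x - (j:ℝ))) := by
          rw [Finset.sum_range_succ (fun k => (k:ℝ) * St m k * ∏ j ∈ range k, (x - (j:ℝ))) (m+1)]
          rw [St_gt m (m+1) (by omega)]
          push_cast; ring
      _ = ∑ k ∈ range (m+1), ((St m k:ℝ) * ∏ j ∈ range (k+1), (x - (j:ℝ)))
          + ∑ k ∈ range (m+1), (((k:ℝ)+1) * St m (k+1) * ∏ j ∈ range (k+1), (x - (j:ℝ))) := by
          rw [Finset.sum_range_succ' (fun k => (k:ℝ) * St m k * ∏ j ∈ range k, (x - (j:ℝ))) (m+1)]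
          push_cast; ring
      _ = ∑ k ∈ range (m+1), ((St (m+1) (k+1):ℝ)) * ∏ j ∈ range (k+1), (x - (j:ℝ)) := by
          rw [← Finset.sum_add_distrib]
          refine Finset.sum_congr rfl (fun k _ => ?_)
          rw [St_succ_succ]
          push_cast; ring
      _ = ∑ k ∈ range (m+2), (St (m+1) k : ℝ) * ∏ j ∈ range k, (x - (j:ℝ)) := by
          rw [Finset.sum_range_succ' (fun k => (St (m+1) k:ℝ) * ∏ j ∈ range k, (x - (j:ℝ))) (m+1)]
          rw [St_succ_zero]
          push_cast; ring

/-- Factorial and ordinary moments of the Catalan distribution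
`P(n) = A_n p^{n−1} q^n` of the busy-period size in `M/M/1`. -/
theorem stmt1 (m : ℕ) (hm : 1 ≤ m)
    (P : ℝ → ℕ → ℝ)
    (hP : ∀ lam : ℝ, ∀ n : ℕ, 1 ≤ n →
      P lam n = ((Nat.choose (2 * n - 2) (n - 1) : ℝ) / n) *
        (lam / (1 + lam)) ^ (n - 1) * (1 / (1 + lam)) ^ n) :
    (∀ lam : ℝ, 0 < lam → lam < 1 →
      HasSum (fun n : ℕ => (∏ j ∈ Finset.range m, ((n : ℝ) + 1 - j)) * P lam (n + 1))
        (2 ^ (m - 1) * (Nat.doubleFactorial (2 * m - 3) : ℝ) * lam ^ (m - 1) /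
          (1 - lam) ^ (2 * m - 1))) ∧
    Filter.Tendsto (fun lam : ℝ =>
        (∑' n : ℕ, ((n : ℝ) + 1) ^ m * P lam (n + 1)) * (1 - lam) ^ (2 * m - 1) /
          (2 ^ (m - 1) * (Nat.doubleFactorial (2 * m - 3) : ℝ) * lam ^ (m - 1)))
      (nhdsWithin 1 (Set.Ioo 0 1)) (nhds 1) := by
  obtain ⟨M, rfl⟩ : ∃ M, m = M + 1 := ⟨m - 1, by omega⟩
  have hdd : (((2*(M+1)-3).doubleFactorial : ℕ) : ℝ) = Dd M := ddf M
  have hmain : ∀ lam : ℝ, 0 < lam → lam < 1 → ∀ K : ℕ,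
      HasSum (fun n : ℕ => (∏ j ∈ Finset.range (K+1), ((n:ℝ) + 1 - j)) * P lam (n+1))
        (2^K * Dd K * lam^K / (1-lam)^(2*K+1)) := by
    intro lam h0 h1 K
    have hL := L1 K h0 h1
    have hfun : ∀ n : ℕ, (∏ j ∈ Finset.range (K+1), ((n:ℝ) + 1 - j)) * P lam (n+1)
        = (((n+1).descFactorial (K+1) : ℕ):ℝ) *
          (((2*n).choose n : ℝ)/((n:ℝ)+1) * (lam/(1+lam))^n * (1/(1+lam))^(n+1)) := by
      intro n
      have hPn := hP lam (n+1) (by omega)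
      have e1 : 2*(n+1)-2 = 2*n := by omega
      have e2 : (n+1)-1 = n := by omega
      rw [e1, e2] at hPn
      have hprod : (∏ j ∈ Finset.range (K+1), ((n:ℝ) + 1 - j)) = (((n+1).descFactorial (K+1) : ℕ):ℝ) := by
        rw [← prod_cast_descFactorial (n+1) (K+1)]
        refine Finset.prod_congr rfl (fun j _ => ?_)
        push_cast; ring
      rw [hprod, hPn]
      push_cast
      ring
    rw [show (fun n : ℕ => (∏ j ∈ Finset.range (K+1), ((n:ℝ) + 1 - j)) * P lam (n+1)) = _ from funext hfun]
    exact hL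
  constructor
  · intro lam h0 h1
    have hmm := hmain lam h0 h1 M
    have e : 2*(M+1)-1 = 2*M+1 := by omega
    rw [e, hdd, Nat.add_sub_cancel]
    exact hmm
  · -- the limit statement
    have htsum : ∀ lam : ℝ, lam ∈ Set.Ioo (0:ℝ) 1 →
        (∑' n : ℕ, ((n:ℝ)+1)^(M+1) * P lam (n+1))
          = ∑ i ∈ range (M+1), (St (M+1) (i+1) : ℝ)
              * (2^i * Dd i * lam^i / (1-lam)^(2*i+1)) := by
      intro lam hlam
      obtain ⟨h0, h1⟩ := hlam
      have hk : ∀ k ∈ range (M+2),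
          HasSum (fun n : ℕ => (St (M+1) k : ℝ) * ((∏ j ∈ range k, ((n:ℝ)+1-j)) * P lam (n+1)))
            ((St (M+1) k : ℝ) * (2^(k-1) * Dd (k-1) * lam^(k-1) / (1-lam)^(2*(k-1)+1))) := by
        intro k _
        cases k with
        | zero =>
          rw [St_succ_zero]
          simp only [Nat.cast_zero, zero_mul]
          exact hasSum_zero
        | succ i =>
          simp only [Nat.add_sub_cancel]
          exact (hmain lam h0 h1 i).mul_left _
      have hks := hasSum_sum hk
      have hfe : (fun n : ℕ => ((n:ℝ)+1)^(M+1) * P lam (n+1))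
          = fun n : ℕ => ∑ k ∈ range (M+2),
              (St (M+1) k : ℝ) * ((∏ j ∈ range k, ((n:ℝ)+1-j)) * P lam (n+1)) := by
        funext n
        rw [stirling_expand (M+1) ((n:ℝ)+1), Finset.sum_mul]
        refine Finset.sum_congr rfl (fun k _ => ?_)
        ring
      rw [← hfe] at hks
      rw [hks.tsum_eq]
      rw [Finset.sum_range_succ' (fun k => (St (M+1) k : ℝ)
        * (2^(k-1) * Dd (k-1) * lam^(k-1) / (1-lam)^(2*(k-1)+1))) (M+1)]
      rw [St_succ_zero]
      simp only [Nat.cast_zero, zero_mul, add_zero, Nat.add_sub_cancel]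
    have e : 2*(M+1)-1 = 2*M+1 := by omega
    simp only [e, hdd, Nat.add_sub_cancel]
    have hDM := Dd_pos M
    set H : ℝ → ℝ := fun lam => (∑ i ∈ range (M+1), (St (M+1) (i+1):ℝ)
        * (2^i * Dd i * lam^i * (1-lam)^(2*(M-i)))) / (2^M * Dd M * lam^M) with hH
    apply tendsto_nhdsWithin_congr (f := H)
    · intro x hx
      obtain ⟨hx0, hx1⟩ := hx
      rw [htsum x ⟨hx0, hx1⟩]
      have hmlx : (1:ℝ) - x ≠ 0 := by intro hz; simp only [Set.mem_Ioo] at *; nlinarith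
      simp only [hH]
      rw [Finset.sum_mul, Finset.sum_div, Finset.sum_div]
      refine Finset.sum_congr rfl (fun i hi => ?_)
      rw [mem_range] at hi
      apply congrArg (fun z => z / (2^M * Dd M * x^M))
      have ee : ((1:ℝ)-x)^(2*M+1) = (1-x)^(2*i+1) * (1-x)^(2*(M-i)) := by
        rw [← pow_add]; congr 1; omega
      rw [ee]
      field_simp
    · have hH1 : H 1 = 1 := by
        rw [hH]
        simp only
        rw [Finset.sum_range_succ]
        have hz : ∀ i ∈ range M, (St (M+1) (i+1):ℝ) * (2^i * Dd i * (1:ℝ)^i * ((1:ℝ)-1)^(2*(M-i))) = 0 := by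
          intro i hi
          rw [mem_range] at hi
          have : ((1:ℝ)-1)^(2*(M-i)) = 0 := by
            rw [sub_self]; exact zero_pow (by omega)
          rw [this]; ring
        rw [Finset.sum_eq_zero hz, zero_add, St_diag, Nat.sub_self]
        norm_num
        exact hDM.ne'
      have hcont : ContinuousAt H 1 := by
        rw [hH]
        apply ContinuousAt.div
        · fun_prop
        · fun_prop
        · simp only [one_pow]
          positivity
      have := hcont.tendsto.mono_left (nhdsWithin_le_nhds (s := Set.Ioo (0:ℝ) 1))
      rwa [hH1] at this
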